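/- Let λ = (λ₁ ≥ λ₂ ≥ ... ≥ λ_t) be a partition of 2r+1 in which every even part occurs an even number of times (a B-partition). Let (ξ, η) = φ_B(λ) be the ordered pair of partitions with |ξ| + |η| = r attached to λ by the type-B symbol procedure. Then: (i) if L(λ) = λ₁ is odd, then L(ξ) = (λ₁ − 1)/2; (ii) if λ₁ is even, then L(η) = λ₁/2 + 1, where L denotes the largest part. -/

import Mathlib

/-!
STATEMENT 6: Properties of the type-B symbol map `φ_B`.  A partition `l` of `2r+1`
(weakly decreasing list of positive integers) in which every even part occurs an
even number of times is sent to the ordered pair of partitions `(ξ, η)` by: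
padding to odd length, forming `λ*_i = λ_i + (i-1)` (increasing order), splitting
into odd entries `2y+1` (giving ξ) and even entries `2x` (giving η), and
subtracting staircases.  Claims (with `L` = largest part, `λ₁ = l.headD 0`):
|ξ| + |η| = r; (i) λ₁ odd ⇒ L(ξ) = (λ₁ − 1)/2; (ii) λ₁ even ⇒ L(η) = λ₁/2 + 1.
-/

namespace Stmt6

/-- Largest part of a partition given as a list. -/
def Lp (l : List ℕ) : ℕ := l.foldr max 0

/-- Pad a (decreasing) partition with a trailing zero to make its length odd. -/
def padOdd (l : List ℕ) : List ℕ := if Even l.length then l ++ [0] else l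

/-- `λ*`: read the padded partition in increasing order and add `(i-1)`. -/
def starSeq (l : List ℕ) : List ℕ :=
  List.zipWith (· + ·) l.reverse (List.range l.length)

/-- Halves of the even entries (`2x ↦ x`), in increasing order. -/
def evenHalves (s : List ℕ) : List ℕ := (s.filter (fun x => x % 2 = 0)).map (· / 2)

/-- Halves of the odd entries (`2y+1 ↦ y`), in increasing order. -/
def oddHalves (s : List ℕ) : List ℕ := (s.filter (fun x => x % 2 = 1)).map (· / 2)

/-- Subtract the staircase `(0,1,2,…)` from an increasing sequence. -/
def unstair (s : List ℕ) : List ℕ :=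
  List.zipWith (fun a i => a - i) s (List.range s.length)

/-- First member of the ordered pair `φ_B(l)`. -/
def xiB (l : List ℕ) : List ℕ := unstair (oddHalves (starSeq (padOdd l)))

/-- Second member of the ordered pair `φ_B(l)`. -/
def etaB (l : List ℕ) : List ℕ := unstair (evenHalves (starSeq (padOdd l)))

/-! ### auxiliary machinery -/

def unstairC (c : ℕ) : List ℕ → List ℕ
  | [] => []
  | a :: u => (a - c) :: unstairC (c + 1) u

lemma zip_sub_range' : ∀ (u : List ℕ) (c : ℕ),
    List.zipWith (fun a i => a - i) u (List.range' c u.length) = unstairC c u := by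
  intro u
  induction u with
  | nil => intro c; simp [unstairC]
  | cons a u ih => intro c; simp [List.range'_succ, unstairC, ih]

lemma unstair_eq (u : List ℕ) : unstair u = unstairC 0 u := by
  rw [unstair, List.range_eq_range', zip_sub_range']

lemma unstairC_sum : ∀ (u : List ℕ) (c : ℕ), u.Pairwise (· < ·) → (∀ x ∈ u, c ≤ x) →
    (unstairC c u).sum + (List.range' c u.length).sum = u.sum := by
  intro u
  induction u with
  | nil => intro c _ _; simp [unstairC]
  | cons a u ih =>
    intro c hs hc
    rw [List.pairwise_cons] at hs
    have hca : c ≤ a := hc a (by simp)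
    have h1 := ih (c + 1) hs.2 (fun x hx => by have := hs.1 x hx; omega)
    simp only [unstairC, List.length_cons, List.range'_succ, List.sum_cons]
    omega

lemma Lp_cons (a : ℕ) (u : List ℕ) : Lp (a :: u) = max a (Lp u) := rfl

lemma getLastD_irrel (v : List ℕ) (hv : v ≠ []) (d d' : ℕ) : v.getLastD d = v.getLastD d' := by
  cases v with
  | nil => simp at hv
  | cons b w =>
    induction w generalizing b d d' with
    | nil => rfl
    | cons x w ih => simp [List.getLastD]

lemma sorted_last_ge : ∀ (u : List ℕ) (a : ℕ), (a :: u).Pairwise (· < ·) → u ≠ [] →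
    a + u.length ≤ u.getLastD 0 := by
  intro u
  induction u with
  | nil => simp
  | cons b v ih =>
    intro a hs _
    rw [List.pairwise_cons] at hs
    rcases eq_or_ne v [] with rfl | hv
    · have : a < b := hs.1 b (by simp)
      simp [List.getLastD]; omega
    · have h1 := ih b hs.2 hv
      have hab : a < b := hs.1 b (by simp)
      have h2 : (b :: v).getLastD 0 = v.getLastD 0 := by
        cases v with
        | nil => simp at hv
        | cons x w => simp [List.getLastD]
      rw [h2]
      simp only [List.length_cons]
      omega

lemma unstairC_Lp : ∀ (u : List ℕ) (c : ℕ), u.Pairwise (· < ·) → (∀ x ∈ u, c ≤ x) → u ≠ [] →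
    Lp (unstairC c u) + c + u.length = u.getLastD 0 + 1 := by
  intro u
  induction u with
  | nil => simp
  | cons a v ih =>
    intro c hs hc _
    rw [List.pairwise_cons] at hs
    have hca : c ≤ a := hc a (by simp)
    rcases eq_or_ne v [] with rfl | hv
    · simp [unstairC, Lp, List.getLastD]; omega
    · have h1 := ih (c + 1) hs.2 (fun x hx => by have := hs.1 x hx; omega) hv
      have h2 := sorted_last_ge v a (by rw [List.pairwise_cons]; exact hs) hv
      have h3 : (a :: v).getLastD 0 = v.getLastD 0 := by
        cases v with
        | nil => simp at hv
        | cons x w => simp [List.getLastD]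
      rw [h3]
      simp only [unstairC, Lp_cons, List.length_cons]
      omega

lemma starSeq_nil : starSeq [] = [] := by simp [starSeq]

lemma starSeq_cons (h : ℕ) (t : List ℕ) :
    starSeq (h :: t) = starSeq t ++ [h + t.length] := by
  simp only [starSeq, List.reverse_cons, List.length_cons, List.range_succ]
  rw [List.zipWith_append (by simp)]
  simp

lemma starSeq_sorted : ∀ l : List ℕ, l.Pairwise (· ≥ ·) →
    (starSeq l).Pairwise (· < ·) ∧ ∀ x ∈ starSeq l, x + 1 ≤ l.headD 0 + l.length := by
  intro l
  induction l with
  | nil => simp [starSeq]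
  | cons h t ih =>
    intro hs
    rw [List.pairwise_cons] at hs
    obtain ⟨ihs, ihb⟩ := ih hs.2
    have hht : ∀ x ∈ starSeq t, x < h + t.length := by
      intro x hx
      have hb := ihb x hx
      cases t with
      | nil => simp [starSeq] at hx
      | cons b t' =>
        have hbh : b ≤ h := hs.1 b (by simp)
        simp only [List.headD_cons, List.length_cons] at hb ⊢
        omega
    constructor
    · rw [starSeq_cons, List.pairwise_append]
      exact ⟨ihs, by simp, by simpa using hht⟩
    · intro x hx
      rw [starSeq_cons, List.mem_append] at hx
      simp only [List.headD_cons, List.length_cons]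
      rcases hx with hx | hx
      · have := hht x hx; omega
      · simp at hx; omega

lemma sum_zipWith_add : ∀ (a b : List ℕ), a.length = b.length →
    (List.zipWith (· + ·) a b).sum = a.sum + b.sum := by
  intro a
  induction a with
  | nil =>
    intro b h
    cases b with
    | nil => simp
    | cons y b => simp at h
  | cons x a ih =>
    intro b h
    cases b with
    | nil => simp at h
    | cons y b => simp at h; simp [ih b h]; omega

lemma starSeq_sum (l : List ℕ) : (starSeq l).sum = l.sum + (List.range l.length).sum := by
  rw [starSeq, sum_zipWith_add _ _ (by simp), List.sum_reverse]

lemma range_sum_succ (n : ℕ) : (List.range (n + 1)).sum = (List.range n).sum + n := by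
  rw [List.range_succ]; simp

lemma tri_id : ∀ m : ℕ, (List.range (m + 1)).sum + (List.range m).sum = m * m := by
  intro m
  induction m with
  | zero => decide
  | succ m ih =>
    rw [range_sum_succ m] at ih
    rw [range_sum_succ (m + 1), range_sum_succ m]
    nlinarith [ih]

lemma tri_big : ∀ m : ℕ, (List.range (2 * m + 1)).sum = 2 * (m * m) + m := by
  intro m
  induction m with
  | zero => decide
  | succ m ih =>
    have h1 : 2 * (m + 1) + 1 = (2 * m + 1) + 1 + 1 := by ring
    rw [h1, range_sum_succ, range_sum_succ, ih]
    ring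

/-! ### combinatorial structure of B-partitions -/

lemma head_repeat (h : ℕ) (t : List ℕ) (hs : (h :: t).Pairwise (· ≥ ·))
    (hc : Even ((h :: t).count h)) : ∃ t', t = h :: t' := by
  rw [List.pairwise_cons] at hs
  have h1 : (h :: t).count h = t.count h + 1 := by simp
  have h2 : 0 < t.count h := by rcases hc with ⟨k, hk⟩; omega
  have h3 : h ∈ t := List.count_pos_iff.mp h2
  cases t with
  | nil => simp at h3
  | cons b t' =>
    have hb : b ≤ h := hs.1 b (by simp)
    have hs2 := List.pairwise_cons.mp hs.2
    have hhb : h ≤ b := by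
      rcases List.mem_cons.mp h3 with rfl | hm
      · exact le_rfl
      · exact hs2.1 h hm
    exact ⟨t', by rw [le_antisymm hhb hb]⟩

lemma B_tail_odd (h : ℕ) (t : List ℕ) (hodd : h % 2 = 1)
    (hB : ∀ k, Even k → Even ((h :: t).count k)) : ∀ k, Even k → Even (t.count k) := by
  intro k hk
  have h1 := hB k hk
  have hne : h ≠ k := by rw [Nat.even_iff] at hk; omega
  rwa [List.count_cons, if_neg (by simpa using hne), add_zero] at h1

lemma B_tail_two (h : ℕ) (t' : List ℕ)
    (hB : ∀ k, Even k → Even ((h :: h :: t').count k)) : ∀ k, Even k → Even (t'.count k) := by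
  intro k hk
  have h1 := hB k hk
  rw [List.count_cons, List.count_cons] at h1
  rw [Nat.even_iff] at h1 ⊢
  omega

lemma parity_len : ∀ (N : ℕ) (l : List ℕ), l.length ≤ N → l.Pairwise (· ≥ ·) →
    (∀ k, Even k → Even (l.count k)) → l.sum % 2 = l.length % 2 := by
  intro N
  induction N with
  | zero =>
    intro l hl _ _
    have hl0 : l = [] := List.length_eq_zero_iff.mp (by omega)
    subst hl0; simp
  | succ N ih =>
    intro l hl hs hB
    cases l with
    | nil => simp
    | cons h t =>
      rcases Nat.mod_two_eq_zero_or_one h with he | ho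
      · obtain ⟨t', rfl⟩ := head_repeat h t hs (hB h (Nat.even_iff.mpr he))
        have hs' : t'.Pairwise (· ≥ ·) := (List.pairwise_cons.mp (List.pairwise_cons.mp hs).2).2
        have hB' := B_tail_two h t' hB
        have hlen : t'.length ≤ N := by simp at hl; omega
        have h1 := ih t' hlen hs' hB'
        simp only [List.sum_cons, List.length_cons]
        omega
      · have hs' := (List.pairwise_cons.mp hs).2
        have hB' := B_tail_odd h t ho hB
        have h1 := ih t (by simp at hl; omega) hs' hB'
        simp only [List.sum_cons, List.length_cons]
        omega

def cOdd (s : List ℕ) : ℕ := (s.filter (fun x => x % 2 = 1)).length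

lemma cOdd_append_one (w : List ℕ) (e : ℕ) :
    cOdd (w ++ [e]) = cOdd w + (if e % 2 = 1 then 1 else 0) := by
  rw [cOdd, List.filter_append, List.length_append, cOdd]
  rcases Nat.mod_two_eq_zero_or_one e with h | h <;> simp [h]

lemma count_odds : ∀ (N : ℕ) (l : List ℕ), l.length ≤ N → l.Pairwise (· ≥ ·) →
    (∀ k, Even k → Even (l.count k)) →
    2 * cOdd (starSeq l) = l.length + l.sum % 2 := by
  intro N
  induction N with
  | zero =>
    intro l hl _ _
    have hl0 : l = [] := List.length_eq_zero_iff.mp (by omega)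
    subst hl0; simp [starSeq_nil, cOdd]
  | succ N ih =>
    intro l hl hs hB
    cases l with
    | nil => simp [starSeq_nil, cOdd]
    | cons h t =>
      rcases Nat.mod_two_eq_zero_or_one h with he | ho
      · obtain ⟨t', rfl⟩ := head_repeat h t hs (hB h (Nat.even_iff.mpr he))
        have hs' : t'.Pairwise (· ≥ ·) := (List.pairwise_cons.mp (List.pairwise_cons.mp hs).2).2
        have hB' := B_tail_two h t' hB
        have h1 := ih t' (by simp at hl; omega) hs' hB'
        rw [starSeq_cons, starSeq_cons, cOdd_append_one, cOdd_append_one]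
        simp only [List.sum_cons, List.length_cons]
        by_cases hp : (h + t'.length) % 2 = 1
        · rw [if_pos hp, if_neg (by omega)]
          omega
        · rw [if_neg hp, if_pos (by omega)]
          omega
      · have hs' := (List.pairwise_cons.mp hs).2
        have hB' := B_tail_odd h t ho hB
        have h1 := ih t (by simp at hl; omega) hs' hB'
        have h2 := parity_len N t (by simp at hl; omega) hs' hB'
        rw [starSeq_cons, cOdd_append_one]
        simp only [List.sum_cons, List.length_cons]
        by_cases hp : (h + t.length) % 2 = 1
        · rw [if_pos hp]; omega
        · rw [if_neg hp]; omega

lemma filter_parity_len : ∀ s : List ℕ,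
    (s.filter (fun x => x % 2 = 1)).length + (s.filter (fun x => x % 2 = 0)).length = s.length := by
  intro s
  induction s with
  | nil => simp
  | cons a s ih =>
    rw [List.filter_cons, List.filter_cons]
    rcases Nat.mod_two_eq_zero_or_one a with h | h <;> simp [h] <;> omega

lemma halves_sum : ∀ s : List ℕ,
    2 * ((oddHalves s).sum + (evenHalves s).sum) + cOdd s = s.sum := by
  intro s
  induction s with
  | nil => simp [oddHalves, evenHalves, cOdd]
  | cons a s ih =>
    simp only [oddHalves, evenHalves, cOdd, List.filter_cons, List.sum_cons] at ih ⊢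
    rcases Nat.mod_two_eq_zero_or_one a with h | h <;> simp [h] <;> omega

lemma sorted_half (p : ℕ) : ∀ v : List ℕ, v.Pairwise (· < ·) → (∀ x ∈ v, x % 2 = p) →
    (v.map (· / 2)).Pairwise (· < ·) := by
  intro v
  induction v with
  | nil => simp
  | cons a v ih =>
    intro hs hp
    rw [List.pairwise_cons] at hs
    rw [List.map_cons, List.pairwise_cons]
    refine ⟨?_, ih hs.2 (fun x hx => hp x (by simp [hx]))⟩
    intro b hb
    obtain ⟨x, hx, rfl⟩ := List.mem_map.mp hb
    have h1 := hs.1 x hx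
    have h2 := hp x (by simp [hx])
    have h3 := hp a (by simp)
    omega

lemma mem_filter_parity (s : List ℕ) (p : ℕ) :
    ∀ x ∈ s.filter (fun x => x % 2 = p), x % 2 = p := by
  intro x hx
  have := (List.mem_filter.mp hx).2
  simpa using this

theorem stmt6 (r : ℕ) (l : List ℕ)
    (hsort : l.Pairwise (· ≥ ·))
    (hpos : ∀ x ∈ l, 0 < x)
    (hsum : l.sum = 2 * r + 1)
    (hB : ∀ k : ℕ, Even k → Even (l.count k)) :
    ((xiB l).sum + (etaB l).sum = r) ∧
    (Odd (l.headD 0) → Lp (xiB l) = (l.headD 0 - 1) / 2) ∧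
    (Even (l.headD 0) → Lp (etaB l) = l.headD 0 / 2 + 1) := by
  cases l with
  | nil => simp at hsum
  | cons h t =>
  have hparl := parity_len (h :: t).length (h :: t) le_rfl hsort hB
  rw [hsum] at hparl
  simp only [List.length_cons] at hparl
  obtain ⟨m, hlen⟩ : ∃ m, t.length = 2 * m := ⟨t.length / 2, by omega⟩
  have hpad : padOdd (h :: t) = h :: t := by
    rw [padOdd, if_neg]
    rw [Nat.even_iff]
    simp only [List.length_cons]
    omega
  have hco := count_odds (h :: t).length (h :: t) le_rfl hsort hB
  rw [hsum] at hco
  simp only [List.length_cons] at hco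
  have hcodd : cOdd (starSeq (h :: t)) = m + 1 := by omega
  have hstS : (starSeq (h :: t)).Pairwise (· < ·) := (starSeq_sorted (h :: t) hsort).1
  have hlenO : (oddHalves (starSeq (h :: t))).length = m + 1 := by
    rw [oddHalves, List.length_map]; exact hcodd
  have hflen := filter_parity_len (starSeq (h :: t))
  have hlenstar : (starSeq (h :: t)).length = 2 * m + 1 := by
    rw [starSeq]; simp [hlen]
  have hlenE : (evenHalves (starSeq (h :: t))).length = m := by
    rw [evenHalves, List.length_map]
    have h1 : (List.filter (fun x => x % 2 = 1) (starSeq (h :: t))).length = m + 1 := hcodd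
    omega
  have hOsorted : (oddHalves (starSeq (h :: t))).Pairwise (· < ·) := by
    rw [oddHalves]
    exact sorted_half 1 _ (List.Pairwise.filter _ hstS) (mem_filter_parity _ 1)
  have hEsorted : (evenHalves (starSeq (h :: t))).Pairwise (· < ·) := by
    rw [evenHalves]
    exact sorted_half 0 _ (List.Pairwise.filter _ hstS) (mem_filter_parity _ 0)
  have hxi : xiB (h :: t) = unstairC 0 (oddHalves (starSeq (h :: t))) := by
    rw [xiB, hpad, unstair_eq]
  have heta : etaB (h :: t) = unstairC 0 (evenHalves (starSeq (h :: t))) := by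
    rw [etaB, hpad, unstair_eq]
  have hsum1 := unstairC_sum (oddHalves (starSeq (h :: t))) 0 hOsorted (fun x _ => Nat.zero_le x)
  have hsum2 := unstairC_sum (evenHalves (starSeq (h :: t))) 0 hEsorted (fun x _ => Nat.zero_le x)
  rw [hlenO, ← List.range_eq_range'] at hsum1
  rw [hlenE, ← List.range_eq_range'] at hsum2
  have hhs := halves_sum (starSeq (h :: t))
  have hss := starSeq_sum (h :: t)
  have hll : (h :: t).length = 2 * m + 1 := by simp only [List.length_cons]; omega
  rw [hsum, hll] at hss
  have htri1 := tri_id m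
  have htri2 := tri_big m
  have hstarcons := starSeq_cons h t
  refine ⟨?_, ?_, ?_⟩
  · rw [hxi, heta]
    rw [hcodd] at hhs
    generalize hM : m * m = M at htri1 htri2
    omega
  · intro hodd
    rw [Nat.odd_iff] at hodd
    simp only [List.headD_cons] at hodd ⊢
    have he : (h + t.length) % 2 = 1 := by omega
    have hOlast : oddHalves (starSeq (h :: t)) = oddHalves (starSeq t) ++ [(h + t.length) / 2] := by
      rw [hstarcons, oddHalves, oddHalves, List.filter_append, List.map_append]
      congr 1
      simp [he]
    have hne : oddHalves (starSeq (h :: t)) ≠ [] := by rw [hOlast]; simp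
    have hLp := unstairC_Lp (oddHalves (starSeq (h :: t))) 0 hOsorted (fun x _ => Nat.zero_le x) hne
    rw [hlenO] at hLp
    have hlast : (oddHalves (starSeq (h :: t))).getLastD 0 = (h + t.length) / 2 := by
      rw [hOlast, List.getLastD_concat]
    rw [hlast] at hLp
    rw [hxi]
    omega
  · intro heven
    rw [Nat.even_iff] at heven
    simp only [List.headD_cons] at heven ⊢
    have he : (h + t.length) % 2 = 0 := by omega
    have hElast : evenHalves (starSeq (h :: t)) = evenHalves (starSeq t) ++ [(h + t.length) / 2] := by
      rw [hstarcons, evenHalves, evenHalves, List.filter_append, List.map_append]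
      congr 1
      simp [he]
    have hne : evenHalves (starSeq (h :: t)) ≠ [] := by rw [hElast]; simp
    have hLp := unstairC_Lp (evenHalves (starSeq (h :: t))) 0 hEsorted (fun x _ => Nat.zero_le x) hne
    rw [hlenE] at hLp
    have hlast : (evenHalves (starSeq (h :: t))).getLastD 0 = (h + t.length) / 2 := by
      rw [hElast, List.getLastD_concat]
    rw [hlast] at hLp
    rw [heta]
    omega

end Stmt6
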